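/- arXiv:2205.02342 — 2 statements merged into one kernel-verified Lean document; each statement's English description precedes it below -/
import Mathlib

section
/- If a positive linear map Φ : M_n(ℂ) → M_m(ℂ) satisfies tr[Φ(K)* A^p Φ(K) B^{1-p}] ≤ tr[K* Φ†(A)^p K Φ†(B)^{1-p}] for all 0 ≤ p ≤ 1, all positive semidefinite A, B ∈ M_m(ℂ), and all K ∈ M_n(ℂ), then Φ is a Schwarz map, i.e. Φ(K*K) ≥ Φ(K)*Φ(K) for all K. -/
open Matrix
open scoped ComplexOrder

/-- Real power of a matrix, defined spectrally for Hermitian matrices (junk value `0` otherwise). -/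
noncomputable def mpow {k : ℕ} (A : Matrix (Fin k) (Fin k) ℂ) (p : ℝ) : Matrix (Fin k) (Fin k) ℂ :=
  if hA : A.IsHermitian then
    (hA.eigenvectorUnitary : Matrix (Fin k) (Fin k) ℂ) *
      Matrix.diagonal (fun i => ((hA.eigenvalues i ^ p : ℝ) : ℂ)) *
      (hA.eigenvectorUnitary : Matrix (Fin k) (Fin k) ℂ)ᴴ
  else 0

/-- A Schwarz map: `Φ(K*K) ≥ Φ(K)*Φ(K)` for all `K`. -/
def IsSchwarz {a b : ℕ} (Φ : Matrix (Fin a) (Fin a) ℂ →ₗ[ℂ] Matrix (Fin b) (Fin b) ℂ) : Prop :=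
  ∀ K, (Φ (Kᴴ * K) - (Φ K)ᴴ * Φ K).PosSemidef

/-- A positive map: sends positive semidefinite matrices to positive semidefinite matrices. -/
def IsPositiveMap {a b : ℕ} (Φ : Matrix (Fin a) (Fin a) ℂ →ₗ[ℂ] Matrix (Fin b) (Fin b) ℂ) : Prop :=
  ∀ X, X.PosSemidef → (Φ X).PosSemidef

/-- `Ψ` is the Hilbert–Schmidt adjoint of `Φ`: `⟨X, Φ Y⟩ = ⟨Ψ X, Y⟩`. -/
def IsHSAdjoint {a b : ℕ} (Φ : Matrix (Fin a) (Fin a) ℂ →ₗ[ℂ] Matrix (Fin b) (Fin b) ℂ)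
    (Ψ : Matrix (Fin b) (Fin b) ℂ →ₗ[ℂ] Matrix (Fin a) (Fin a) ℂ) : Prop :=
  ∀ X Y, (Xᴴ * Φ Y).trace = ((Ψ X)ᴴ * Y).trace

lemma mpow_one' {k : ℕ} {A : Matrix (Fin k) (Fin k) ℂ} (hA : A.IsHermitian) : mpow A 1 = A := by
  rw [mpow, dif_pos hA]
  conv_rhs => rw [hA.spectral_theorem]
  simp [Real.rpow_one, Function.comp_def, Matrix.star_eq_conjTranspose]

lemma mpow_zero' {k : ℕ} {A : Matrix (Fin k) (Fin k) ℂ} (hA : A.IsHermitian) : mpow A 0 = 1 := by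
  rw [mpow, dif_pos hA]
  have : (Matrix.diagonal (fun i : Fin k => ((hA.eigenvalues i ^ (0:ℝ) : ℝ) : ℂ))) = 1 := by
    simp [Real.rpow_zero]
  rw [this, mul_one, ← Matrix.star_eq_conjTranspose]
  exact (Matrix.mem_unitaryGroup_iff).mp hA.eigenvectorUnitary.2

lemma exists_psd_sub' {k : ℕ} {X : Matrix (Fin k) (Fin k) ℂ} (hX : X.IsHermitian) :
    ∃ P Q : Matrix (Fin k) (Fin k) ℂ, P.PosSemidef ∧ Q.PosSemidef ∧ X = P - Q := by
  set U : Matrix (Fin k) (Fin k) ℂ := (hX.eigenvectorUnitary : Matrix (Fin k) (Fin k) ℂ)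
  refine ⟨U * Matrix.diagonal (fun i => ((max (hX.eigenvalues i) 0 : ℝ) : ℂ)) * Uᴴ,
          U * Matrix.diagonal (fun i => ((max (-hX.eigenvalues i) 0 : ℝ) : ℂ)) * Uᴴ, ?_, ?_, ?_⟩
  · exact (Matrix.posSemidef_diagonal_iff.mpr fun i => by
      exact_mod_cast Complex.zero_le_real.mpr (le_max_right _ _)).mul_mul_conjTranspose_same U
  · exact (Matrix.posSemidef_diagonal_iff.mpr fun i => by
      exact_mod_cast Complex.zero_le_real.mpr (le_max_right _ _)).mul_mul_conjTranspose_same U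
  · have hd : (Matrix.diagonal (RCLike.ofReal ∘ hX.eigenvalues) : Matrix (Fin k) (Fin k) ℂ) =
        Matrix.diagonal (fun i => ((max (hX.eigenvalues i) 0 : ℝ) : ℂ)) -
          Matrix.diagonal (fun i => ((max (-hX.eigenvalues i) 0 : ℝ) : ℂ)) := by
      rw [Matrix.diagonal_sub]
      have hfun : (RCLike.ofReal ∘ hX.eigenvalues : Fin k → ℂ) =
          fun i => ((max (hX.eigenvalues i) 0 : ℝ) : ℂ) - ((max (-hX.eigenvalues i) 0 : ℝ) : ℂ) := by
        funext i
        show ((hX.eigenvalues i : ℝ) : ℂ) = _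
        rw [← Complex.ofReal_sub]
        norm_cast
        rcases le_total (hX.eigenvalues i) 0 with h | h
        · simp [max_eq_right h, max_eq_left (neg_nonneg.mpr h)]
        · simp [max_eq_left h, max_eq_right (neg_nonpos.mpr h)]
      rw [hfun]
    conv_lhs => rw [hX.spectral_theorem, hd]
    rw [Unitary.conjStarAlgAut_apply, Matrix.mul_sub, Matrix.sub_mul, Matrix.star_eq_conjTranspose]

lemma posmap_herm' {a b : ℕ} {Φ : Matrix (Fin a) (Fin a) ℂ →ₗ[ℂ] Matrix (Fin b) (Fin b) ℂ}
    (hpos : ∀ X, X.PosSemidef → (Φ X).PosSemidef) (X : Matrix (Fin a) (Fin a) ℂ) :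
    Φ (Xᴴ) = (Φ X)ᴴ := by
  have key : ∀ Y : Matrix (Fin a) (Fin a) ℂ, Y.IsHermitian → (Φ Y).IsHermitian := by
    intro Y hY
    obtain ⟨P, Q, hP, hQ, hYeq⟩ := exists_psd_sub' hY
    rw [hYeq, map_sub]
    exact (hpos P hP).isHermitian.sub (hpos Q hQ).isHermitian
  have hHherm : (X + Xᴴ).IsHermitian := by
    rw [Matrix.IsHermitian, Matrix.conjTranspose_add, Matrix.conjTranspose_conjTranspose, add_comm]
  have hSherm : (Complex.I • (Xᴴ - X)).IsHermitian := by
    rw [Matrix.IsHermitian, Matrix.conjTranspose_smul, Matrix.conjTranspose_sub,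
      Matrix.conjTranspose_conjTranspose]
    simp only [Complex.star_def, Complex.conj_I]
    module
  have hH := key _ hHherm
  have hS := key _ hSherm
  have e1 : Xᴴ = (2⁻¹ : ℂ) • ((X + Xᴴ) - Complex.I • (Complex.I • (Xᴴ - X))) := by
    rw [smul_smul, Complex.I_mul_I]
    module
  have e2 : X = (2⁻¹ : ℂ) • ((X + Xᴴ) + Complex.I • (Complex.I • (Xᴴ - X))) := by
    rw [smul_smul, Complex.I_mul_I]
    module
  have hf1 : Φ (Xᴴ) = (2⁻¹ : ℂ) • (Φ (X + Xᴴ) - Complex.I • Φ (Complex.I • (Xᴴ - X))) := by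
    conv_lhs => rw [e1]
    rw [LinearMap.map_smul, map_sub, LinearMap.map_smul]
  have hf2 : Φ X = (2⁻¹ : ℂ) • (Φ (X + Xᴴ) + Complex.I • Φ (Complex.I • (Xᴴ - X))) := by
    conv_lhs => rw [e2]
    rw [LinearMap.map_smul, map_add, LinearMap.map_smul]
  rw [hf1, hf2, Matrix.conjTranspose_smul, Matrix.conjTranspose_add, Matrix.conjTranspose_smul,
    hH.eq, hS.eq]
  simp only [Complex.star_def, Complex.conj_I, map_inv₀, Complex.conj_ofNat]
  module

lemma matrix_eq_zero_of_forall_trace' {k : ℕ} {M : Matrix (Fin k) (Fin k) ℂ}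
    (h : ∀ Z, (M * Z).trace = 0) : M = 0 := by
  have h0 : (M * Mᴴ).trace = 0 := h Mᴴ
  have h1 : ∑ i, ∑ j, Complex.normSq (M i j) = 0 := by
    have := congrArg Complex.re h0
    simpa [Matrix.trace, Matrix.diag, Matrix.mul_apply, Matrix.conjTranspose_apply,
      Complex.mul_conj, Complex.re_sum] using this
  ext i j
  have h2 := (Finset.sum_eq_zero_iff_of_nonneg (fun i _ =>
    Finset.sum_nonneg fun j _ => Complex.normSq_nonneg (M i j))).mp h1 i (Finset.mem_univ i)
  have h3 := (Finset.sum_eq_zero_iff_of_nonneg (fun j _ =>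
    Complex.normSq_nonneg (M i j))).mp h2 j (Finset.mem_univ j)
  simpa using Complex.normSq_eq_zero.mp h3

lemma adj_herm' {a b : ℕ} {Φ : Matrix (Fin a) (Fin a) ℂ →ₗ[ℂ] Matrix (Fin b) (Fin b) ℂ}
    {Ψ : Matrix (Fin b) (Fin b) ℂ →ₗ[ℂ] Matrix (Fin a) (Fin a) ℂ}
    (hpos : ∀ X, X.PosSemidef → (Φ X).PosSemidef)
    (hadj : ∀ X Y, (Xᴴ * Φ Y).trace = ((Ψ X)ᴴ * Y).trace)
    {X : Matrix (Fin b) (Fin b) ℂ} (hX : X.IsHermitian) : (Ψ X).IsHermitian := by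
  have key : ∀ Z, (((Ψ X)ᴴ - Ψ X) * Z).trace = 0 := by
    intro Z
    have h1 : ((Ψ X)ᴴ * Z).trace = (Xᴴ * Φ Z).trace := (hadj X Z).symm
    have h2 : (Ψ X * Z).trace = (Xᴴ * Φ Z).trace := by
      have c1 : star ((Ψ X * Z).trace) = ((Ψ X)ᴴ * Zᴴ).trace := by
        rw [← Matrix.trace_conjTranspose, Matrix.conjTranspose_mul, Matrix.trace_mul_comm]
      have c2 : ((Ψ X)ᴴ * Zᴴ).trace = (Xᴴ * (Φ Z)ᴴ).trace := by
        rw [← hadj X Zᴴ, posmap_herm' hpos]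
      have c3 : star ((Xᴴ * (Φ Z)ᴴ).trace) = (X * Φ Z).trace := by
        rw [← Matrix.trace_conjTranspose, Matrix.conjTranspose_mul,
          Matrix.conjTranspose_conjTranspose, Matrix.conjTranspose_conjTranspose,
          Matrix.trace_mul_comm]
      calc (Ψ X * Z).trace = star (((Ψ X)ᴴ * Zᴴ).trace) := by rw [← c1, star_star]
        _ = (X * Φ Z).trace := by rw [c2]; exact c3
        _ = (Xᴴ * Φ Z).trace := by rw [hX.eq]
    rw [Matrix.sub_mul, Matrix.trace_sub, h1, h2, sub_self]
  have h0 : (Ψ X)ᴴ - Ψ X = 0 := matrix_eq_zero_of_forall_trace' key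
  rw [Matrix.IsHermitian, ← sub_eq_zero]
  exact h0

theorem stmt1' {n m : ℕ}
    (Φ : Matrix (Fin n) (Fin n) ℂ →ₗ[ℂ] Matrix (Fin m) (Fin m) ℂ)
    (Ψ : Matrix (Fin m) (Fin m) ℂ →ₗ[ℂ] Matrix (Fin n) (Fin n) ℂ)
    (hpos : ∀ X, X.PosSemidef → (Φ X).PosSemidef)
    (hadj : ∀ X Y, (Xᴴ * Φ Y).trace = ((Ψ X)ᴴ * Y).trace)
    (hineq : ∀ (p : ℝ), 0 ≤ p → p ≤ 1 →
      ∀ (A B : Matrix (Fin m) (Fin m) ℂ), A.PosSemidef → B.PosSemidef →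
      ∀ (K : Matrix (Fin n) (Fin n) ℂ),
        ((Φ K)ᴴ * mpow A p * Φ K * mpow B (1 - p)).trace.re ≤
          (Kᴴ * mpow (Ψ A) p * K * mpow (Ψ B) (1 - p)).trace.re) :
    ∀ K, (Φ (Kᴴ * K) - (Φ K)ᴴ * Φ K).PosSemidef := by
  intro K
  set M := Φ (Kᴴ * K) - (Φ K)ᴴ * Φ K with hMdef
  have hMherm : M.IsHermitian :=
    (hpos _ (Matrix.posSemidef_conjTranspose_mul_self K)).isHermitian.sub
      (Matrix.posSemidef_conjTranspose_mul_self (Φ K)).isHermitian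
  refine Matrix.PosSemidef.of_dotProduct_mulVec_nonneg hMherm (fun v => ?_)
  -- the rank-one PSD matrix A = v vᴴ
  set A : Matrix (Fin m) (Fin m) ℂ := Matrix.vecMulVec v (star v) with hAdef
  have hApsd : A.PosSemidef := by
    refine Matrix.posSemidef_iff_dotProduct_mulVec.mpr ⟨?_, ?_⟩
    · ext i j
      simp [hAdef, Matrix.vecMulVec_apply, Matrix.conjTranspose_apply, mul_comm]
    · intro x
      have : star x ⬝ᵥ (A *ᵥ x) = star (star v ⬝ᵥ x) * (star v ⬝ᵥ x) := by
        simp only [hAdef, Matrix.mulVec, Matrix.vecMulVec_apply, dotProduct,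
          Pi.star_apply, star_mul', star_star, Finset.mul_sum, Finset.sum_mul, star_sum]
        rw [Finset.sum_comm]
        exact Finset.sum_congr rfl fun i _ => Finset.sum_congr rfl fun j _ => by ring
      rw [this]
      exact star_mul_self_nonneg _
  have hPsiA := adj_herm' hpos hadj hApsd.isHermitian
  have hPsi1 := adj_herm' hpos hadj (Matrix.isHermitian_one (n := Fin m) (α := ℂ))
  have key := hineq 1 zero_le_one le_rfl A 1 hApsd Matrix.PosSemidef.one Kᴴ
  rw [sub_self, mpow_one' hApsd.isHermitian, mpow_zero' Matrix.isHermitian_one,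
    mpow_one' hPsiA, mpow_zero' hPsi1, mul_one, mul_one, Matrix.conjTranspose_conjTranspose,
    posmap_herm' hpos K, Matrix.conjTranspose_conjTranspose] at key
  -- key : (Φ K * A * (Φ K)ᴴ).trace.re ≤ (K * Ψ A * Kᴴ).trace.re
  have lhs_eq : (Φ K * A * (Φ K)ᴴ).trace = (A * ((Φ K)ᴴ * Φ K)).trace := by
    rw [Matrix.trace_mul_cycle, Matrix.trace_mul_comm]
  have rhs_eq : (K * Ψ A * Kᴴ).trace = (A * Φ (Kᴴ * K)).trace := by
    have e1 : (K * Ψ A * Kᴴ).trace = ((Ψ A)ᴴ * (Kᴴ * K)).trace := by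
      rw [hPsiA.eq, Matrix.trace_mul_cycle, Matrix.trace_mul_comm]
    rw [e1, ← hadj A (Kᴴ * K), hApsd.isHermitian.eq]
  rw [lhs_eq, rhs_eq] at key
  have htr : (A * M).trace = star v ⬝ᵥ (M *ᵥ v) := by
    simp only [hAdef, Matrix.trace, Matrix.diag, Matrix.mul_apply, Matrix.vecMulVec_apply,
      dotProduct, Matrix.mulVec, Pi.star_apply, Finset.mul_sum, Finset.sum_mul]
    rw [Finset.sum_comm]
    exact Finset.sum_congr rfl fun i _ => Finset.sum_congr rfl fun j _ => by ring
  have hre : 0 ≤ ((A * M).trace).re := by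
    have : (A * M).trace = (A * Φ (Kᴴ * K)).trace - (A * ((Φ K)ᴴ * Φ K)).trace := by
      rw [hMdef, Matrix.mul_sub, Matrix.trace_sub]
    rw [this, Complex.sub_re]
    linarith
  have him : (star v ⬝ᵥ (M *ᵥ v)).im = 0 := by
    have h1 : star (star v ⬝ᵥ (M *ᵥ v)) = star (M *ᵥ v) ⬝ᵥ v := by
      simp [dotProduct, star_sum, mul_comm]
    have h2 : star (M *ᵥ v) ⬝ᵥ v = star v ⬝ᵥ (M *ᵥ v) := by
      rw [Matrix.star_mulVec, ← Matrix.dotProduct_mulVec, hMherm.eq]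
    have := congrArg Complex.im (h1.trans h2)
    simp only [Complex.star_def, Complex.conj_im] at this
    linarith
  rw [Complex.le_def]
  refine ⟨?_, ?_⟩
  · rw [Complex.zero_re, ← htr]
    exact hre
  · rw [Complex.zero_im]
    exact him.symm

theorem stmt1 {n m : ℕ}
    (Φ : Matrix (Fin n) (Fin n) ℂ →ₗ[ℂ] Matrix (Fin m) (Fin m) ℂ)
    (Ψ : Matrix (Fin m) (Fin m) ℂ →ₗ[ℂ] Matrix (Fin n) (Fin n) ℂ)
    (hpos : IsPositiveMap Φ) (hadj : IsHSAdjoint Φ Ψ)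
    (hineq : ∀ (p : ℝ), 0 ≤ p → p ≤ 1 →
      ∀ (A B : Matrix (Fin m) (Fin m) ℂ), A.PosSemidef → B.PosSemidef →
      ∀ (K : Matrix (Fin n) (Fin n) ℂ),
        ((Φ K)ᴴ * mpow A p * Φ K * mpow B (1 - p)).trace.re ≤
          (Kᴴ * mpow (Ψ A) p * K * mpow (Ψ B) (1 - p)).trace.re) :
    IsSchwarz Φ := by
  exact stmt1' Φ Ψ hpos hadj hineq
end

section
/- For positive definite X, Y ∈ M_n(ℂ) and any r with 0 < r < 1 or r < 0, the reverse Hölder inequality holds: tr[XY] ≥ (tr[X^r])^{1/r} (tr[Y^{r/(r-1)}])^{(r-1)/r}. -/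
open Matrix
open scoped ComplexOrder

lemma rev_holder_aux {ι : Type*} (s : Finset ι) (w a b : ι → ℝ)
    (hw : ∀ i, 0 ≤ w i) (ha : ∀ i, 0 < a i) (hb : ∀ i, 0 < b i)
    {r : ℝ} (hr0 : 0 < r) (hr1 : r < 1) :
    (∑ i ∈ s, w i * a i ^ r) ^ (1/r) * (∑ i ∈ s, w i * b i ^ (r/(r-1))) ^ ((r-1)/r)
      ≤ ∑ i ∈ s, w i * (a i * b i) := by
  have hrne : r ≠ 0 := ne_of_gt hr0
  have h1r : 0 < 1 - r := by linarith
  set S := ∑ i ∈ s, w i * (a i * b i) with hS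
  set T := ∑ i ∈ s, w i * b i ^ (r/(r-1)) with hT
  set A := ∑ i ∈ s, w i * a i ^ r with hA
  have hSnn : 0 ≤ S := Finset.sum_nonneg fun i _ =>
    mul_nonneg (hw i) (le_of_lt (mul_pos (ha i) (hb i)))
  have hTnn : 0 ≤ T := Finset.sum_nonneg fun i _ =>
    mul_nonneg (hw i) (Real.rpow_nonneg (hb i).le _)
  have hAnn : 0 ≤ A := Finset.sum_nonneg fun i _ =>
    mul_nonneg (hw i) (Real.rpow_nonneg (ha i).le _)
  have hconj : Real.HolderConjugate (1/r) (1/(1-r)) := by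
    rw [Real.holderConjugate_iff]; constructor
    · rw [lt_div_iff₀ hr0]; linarith
    · rw [one_div, one_div, inv_inv, inv_inv]; ring
  have key : A ≤ S ^ r * T ^ (1 - r) := by
    have H := Real.inner_le_Lp_mul_Lq_of_nonneg (s := s) hconj
      (f := fun i => (w i * (a i * b i)) ^ r)
      (g := fun i => (w i * b i ^ (r/(r-1))) ^ (1 - r))
      (fun i _ => Real.rpow_nonneg (mul_nonneg (hw i) (mul_pos (ha i) (hb i)).le) _)
      (fun i _ => Real.rpow_nonneg (mul_nonneg (hw i) (Real.rpow_nonneg (hb i).le _)) _)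
    have e1 : ∀ i ∈ s, (w i * (a i * b i)) ^ r * (w i * b i ^ (r/(r-1))) ^ (1 - r)
        = w i * a i ^ r := by
      intro i _
      rw [Real.mul_rpow (hw i) (mul_pos (ha i) (hb i)).le,
        Real.mul_rpow (hw i) (Real.rpow_nonneg (hb i).le _),
        Real.mul_rpow (ha i).le (hb i).le,
        ← Real.rpow_mul (hb i).le]
      have hexp : r / (r - 1) * (1 - r) = -r := by
        rw [div_mul_eq_mul_div, div_eq_iff (sub_ne_zero.mpr (ne_of_lt hr1))]
        ring
      rw [hexp]
      have hwsplit : w i ^ r * w i ^ (1 - r) = w i := by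
        rcases eq_or_lt_of_le (hw i) with h | h
        · rw [← h, Real.zero_rpow hrne, Real.zero_rpow (ne_of_gt h1r)]; ring
        · rw [← Real.rpow_add h]; simp
      calc w i ^ r * (a i ^ r * b i ^ r) * (w i ^ (1-r) * b i ^ (-r))
          = (w i ^ r * w i ^ (1-r)) * a i ^ r * (b i ^ r * b i ^ (-r)) := by ring
        _ = w i * a i ^ r := by
            rw [hwsplit, ← Real.rpow_add (hb i)]; simp
    have e2 : ∀ i ∈ s, ((w i * (a i * b i)) ^ r) ^ (1/r) = w i * (a i * b i) := by
      intro i _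
      rw [← Real.rpow_mul (mul_nonneg (hw i) (mul_pos (ha i) (hb i)).le),
        mul_one_div_cancel hrne, Real.rpow_one]
    have e3 : ∀ i ∈ s, ((w i * b i ^ (r/(r-1))) ^ (1 - r)) ^ (1/(1-r))
        = w i * b i ^ (r/(r-1)) := by
      intro i _
      rw [← Real.rpow_mul (mul_nonneg (hw i) (Real.rpow_nonneg (hb i).le _)),
        mul_one_div_cancel (ne_of_gt h1r), Real.rpow_one]
    rw [Finset.sum_congr rfl e1, Finset.sum_congr rfl e2, Finset.sum_congr rfl e3] at H
    rw [one_div_one_div, one_div_one_div] at H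
    exact H
  rcases eq_or_lt_of_le hTnn with hT0 | hTpos
  · -- T = 0 forces A = 0
    have hwz : ∀ i ∈ s, w i * b i ^ (r/(r-1)) = 0 :=
      (Finset.sum_eq_zero_iff_of_nonneg fun i _ =>
        mul_nonneg (hw i) (Real.rpow_nonneg (hb i).le _)).mp hT0.symm
    have hA0 : A = 0 := Finset.sum_eq_zero fun i hi => by
      have hbpos : (0:ℝ) < b i ^ (r/(r-1)) := Real.rpow_pos_of_pos (hb i) _
      have : w i = 0 := by
        have := hwz i hi
        rcases mul_eq_zero.mp this with h | h
        · exact h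
        · exact absurd h (ne_of_gt hbpos)
      rw [this, zero_mul]
    rw [hA0, ← hT0, Real.zero_rpow (by positivity : (1:ℝ)/r ≠ 0), zero_mul]
    exact hSnn
  · have step : A ^ (1/r) ≤ S * T ^ ((1-r)/r) := by
      have h1 := Real.rpow_le_rpow hAnn key (by positivity : (0:ℝ) ≤ 1/r)
      rwa [Real.mul_rpow (Real.rpow_nonneg hSnn _) (Real.rpow_nonneg hTnn _),
        ← Real.rpow_mul hSnn, ← Real.rpow_mul hTnn, mul_one_div_cancel hrne,
        Real.rpow_one, mul_one_div] at h1
    have hTpow : (0:ℝ) < T ^ ((r-1)/r) := Real.rpow_pos_of_pos hTpos _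
    calc A ^ (1/r) * T ^ ((r-1)/r) ≤ (S * T ^ ((1-r)/r)) * T ^ ((r-1)/r) := by
          exact mul_le_mul_of_nonneg_right step hTpow.le
      _ = S * (T ^ ((1-r)/r) * T ^ ((r-1)/r)) := by ring
      _ = S := by
          rw [← Real.rpow_add hTpos]
          have : (1-r)/r + (r-1)/r = 0 := by ring
          rw [this, Real.rpow_zero, mul_one]

/-- Weighted reverse Hölder inequality for `0 < r < 1` or `r < 0`. -/
lemma rev_holder {ι : Type*} (s : Finset ι) (w a b : ι → ℝ)
    (hw : ∀ i, 0 ≤ w i) (ha : ∀ i, 0 < a i) (hb : ∀ i, 0 < b i)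
    {r : ℝ} (hr : (0 < r ∧ r < 1) ∨ r < 0) :
    (∑ i ∈ s, w i * a i ^ r) ^ (1/r) * (∑ i ∈ s, w i * b i ^ (r/(r-1))) ^ ((r-1)/r)
      ≤ ∑ i ∈ s, w i * (a i * b i) := by
  rcases hr with ⟨h0, h1⟩ | hneg
  · exact rev_holder_aux s w a b hw ha hb h0 h1
  · have hrne : r ≠ 0 := ne_of_lt hneg
    have hr1neg : r - 1 < 0 := by linarith
    have hr1ne : r - 1 ≠ 0 := ne_of_lt hr1neg
    set r' := r / (r - 1) with hr'def
    have h0' : 0 < r' := div_pos_of_neg_of_neg hneg hr1neg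
    have e1 : r' - 1 = 1 / (r - 1) := by
      rw [hr'def, div_sub_one hr1ne]
      norm_num
    have h1' : r' < 1 := by
      have h2 : r' - 1 < 0 := by rw [e1]; exact one_div_neg.mpr hr1neg
      linarith
    have e2 : r' / (r' - 1) = r := by
      rw [e1, hr'def]
      field_simp
    have e3 : 1 / r' = (r - 1) / r := by rw [hr'def, one_div_div]
    have e4 : (r' - 1) / r' = 1 / r := by
      rw [e1, hr'def]
      rw [div_div_div_comm]
      simp [div_self hr1ne]
    have H := rev_holder_aux s w b a hw hb ha h0' h1'
    rw [e2, e3, e4] at H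
    have hsum : ∑ i ∈ s, w i * (b i * a i) = ∑ i ∈ s, w i * (a i * b i) :=
      Finset.sum_congr rfl fun i _ => by ring
    rw [hsum] at H
    calc (∑ i ∈ s, w i * a i ^ r) ^ (1/r) * (∑ i ∈ s, w i * b i ^ r') ^ ((r-1)/r)
        = (∑ i ∈ s, w i * b i ^ r') ^ ((r-1)/r) * (∑ i ∈ s, w i * a i ^ r) ^ (1/r) :=
          mul_comm _ _
      _ ≤ _ := H

lemma trace_mpow {k : ℕ} (A : Matrix (Fin k) (Fin k) ℂ) (hA : A.IsHermitian) (p : ℝ) :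
    (mpow A p).trace = ((∑ i, hA.eigenvalues i ^ p : ℝ) : ℂ) := by
  rw [mpow, dif_pos hA, Matrix.trace_mul_cycle, ← Matrix.star_eq_conjTranspose,
    Matrix.mem_unitaryGroup_iff'.mp hA.eigenvectorUnitary.2, one_mul, Matrix.trace_diagonal]
  norm_cast

lemma row_sums {k : ℕ} (W : Matrix (Fin k) (Fin k) ℂ) (h : W * star W = 1) (i : Fin k) :
    ∑ j, Complex.normSq (W i j) = 1 := by
  have h1 : (W * star W) i i = 1 := by rw [h, Matrix.one_apply_eq]
  rw [Matrix.mul_apply] at h1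
  have h2 : ∀ j ∈ Finset.univ, W i j * (star W) j i = ((Complex.normSq (W i j) : ℝ) : ℂ) :=
    fun j _ => by rw [Matrix.star_apply]; exact Complex.mul_conj _
  rw [Finset.sum_congr rfl h2] at h1
  exact_mod_cast h1

lemma col_sums {k : ℕ} (W : Matrix (Fin k) (Fin k) ℂ) (h : star W * W = 1) (j : Fin k) :
    ∑ i, Complex.normSq (W i j) = 1 := by
  have h1 : (star W * W) j j = 1 := by rw [h, Matrix.one_apply_eq]
  rw [Matrix.mul_apply] at h1
  have h2 : ∀ i ∈ Finset.univ, (star W) j i * W i j = ((Complex.normSq (W i j) : ℝ) : ℂ) :=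
    fun i _ => by rw [Matrix.star_apply, mul_comm]; exact Complex.mul_conj _
  rw [Finset.sum_congr rfl h2] at h1
  exact_mod_cast h1

lemma trace_form {k : ℕ} (U V : Matrix (Fin k) (Fin k) ℂ) (d e : Fin k → ℝ) :
    ((U * Matrix.diagonal (fun i => ((d i : ℝ) : ℂ)) * star U) *
      (V * Matrix.diagonal (fun j => ((e j : ℝ) : ℂ)) * star V)).trace
    = ((∑ i, ∑ j, Complex.normSq ((star U * V) i j) * (d i * e j) : ℝ) : ℂ) := by
  set M := star U * V with hM
  have h1 : (U * Matrix.diagonal (fun i => ((d i : ℝ) : ℂ)) * star U) *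
      (V * Matrix.diagonal (fun j => ((e j : ℝ) : ℂ)) * star V)
      = U * (Matrix.diagonal (fun i => ((d i : ℝ) : ℂ)) * M *
          (Matrix.diagonal (fun j => ((e j : ℝ) : ℂ)) * star V)) := by
    rw [hM]
    simp only [Matrix.mul_assoc]
  have h2 : (Matrix.diagonal (fun i => ((d i : ℝ) : ℂ)) * M *
      (Matrix.diagonal (fun j => ((e j : ℝ) : ℂ)) * star V)) * U
      = Matrix.diagonal (fun i => ((d i : ℝ) : ℂ)) * M *
          (Matrix.diagonal (fun j => ((e j : ℝ) : ℂ)) * star M) := by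
    rw [hM, StarMul.star_mul, star_star]
    simp only [Matrix.mul_assoc]
  rw [h1, Matrix.trace_mul_comm, h2]
  rw [Matrix.trace]
  push_cast
  refine Finset.sum_congr rfl fun i _ => ?_
  rw [Matrix.diag_apply, Matrix.mul_apply]
  refine Finset.sum_congr rfl fun j _ => ?_
  rw [Matrix.diagonal_mul, Matrix.diagonal_mul, Matrix.star_apply, RCLike.star_def,
    mul_mul_mul_comm, Complex.mul_conj]
  ring

theorem stmt7 {n : ℕ} (X Y : Matrix (Fin n) (Fin n) ℂ) (hX : X.PosDef) (hY : Y.PosDef)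
    (r : ℝ) (hr : (0 < r ∧ r < 1) ∨ r < 0) :
    (X * Y).trace.re ≥
      ((mpow X r).trace.re) ^ (1 / r) * ((mpow Y (r / (r - 1))).trace.re) ^ ((r - 1) / r) := by
  have hXh : X.IsHermitian := hX.isHermitian
  have hYh : Y.IsHermitian := hY.isHermitian
  set U : Matrix (Fin n) (Fin n) ℂ := ↑hXh.eigenvectorUnitary with hUdef
  set V : Matrix (Fin n) (Fin n) ℂ := ↑hYh.eigenvectorUnitary with hVdef
  set lam : Fin n → ℝ := hXh.eigenvalues with hlamdef
  set mu : Fin n → ℝ := hYh.eigenvalues with hmudef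
  have hUU : star U * U = 1 := Matrix.mem_unitaryGroup_iff'.mp hXh.eigenvectorUnitary.2
  have hUU' : U * star U = 1 := Matrix.mem_unitaryGroup_iff.mp hXh.eigenvectorUnitary.2
  have hVV : star V * V = 1 := Matrix.mem_unitaryGroup_iff'.mp hYh.eigenvectorUnitary.2
  have hVV' : V * star V = 1 := Matrix.mem_unitaryGroup_iff.mp hYh.eigenvectorUnitary.2
  have hWW' : (star U * V) * star (star U * V) = 1 := by
    rw [StarMul.star_mul, star_star, Matrix.mul_assoc, ← Matrix.mul_assoc V, hVV', one_mul, hUU]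
  have hWW : star (star U * V) * (star U * V) = 1 := by
    rw [StarMul.star_mul, star_star, Matrix.mul_assoc, ← Matrix.mul_assoc U, hUU', one_mul, hVV]
  -- traces of matrix powers
  have hmX : (mpow X r).trace.re = ∑ i, lam i ^ r := by
    rw [trace_mpow X hXh r, Complex.ofReal_re]
  have hmY : (mpow Y (r / (r - 1))).trace.re = ∑ j, mu j ^ (r / (r - 1)) := by
    rw [trace_mpow Y hYh (r / (r - 1)), Complex.ofReal_re]
  -- trace of the product
  have hX' : X = U * Matrix.diagonal (fun i => ((lam i : ℝ) : ℂ)) * star U :=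
    hXh.spectral_theorem
  have hY' : Y = V * Matrix.diagonal (fun j => ((mu j : ℝ) : ℂ)) * star V :=
    hYh.spectral_theorem
  have hkey : (X * Y).trace.re
      = ∑ i, ∑ j, Complex.normSq ((star U * V) i j) * (lam i * mu j) := by
    conv_lhs => rw [hX', hY']
    rw [trace_form U V lam mu, Complex.ofReal_re]
  rw [hmX, hmY, hkey, ge_iff_le]
  have main := rev_holder (Finset.univ : Finset (Fin n × Fin n))
    (fun p => Complex.normSq ((star U * V) p.1 p.2)) (fun p => lam p.1) (fun p => mu p.2)
    (fun p => Complex.normSq_nonneg _) (fun p => hX.eigenvalues_pos p.1)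
    (fun p => hY.eigenvalues_pos p.2) hr
  have s1 : ∑ p : Fin n × Fin n, Complex.normSq ((star U * V) p.1 p.2) * lam p.1 ^ r
      = ∑ i, lam i ^ r := by
    rw [Fintype.sum_prod_type]
    refine Finset.sum_congr rfl fun i _ => ?_
    show ∑ j, Complex.normSq ((star U * V) i j) * lam i ^ r = lam i ^ r
    rw [← Finset.sum_mul, row_sums _ hWW' i, one_mul]
  have s2 : ∑ p : Fin n × Fin n, Complex.normSq ((star U * V) p.1 p.2) * mu p.2 ^ (r/(r-1))
      = ∑ j, mu j ^ (r/(r-1)) := by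
    rw [Fintype.sum_prod_type_right]
    refine Finset.sum_congr rfl fun j _ => ?_
    show ∑ i, Complex.normSq ((star U * V) i j) * mu j ^ (r/(r-1)) = mu j ^ (r/(r-1))
    rw [← Finset.sum_mul, col_sums _ hWW j, one_mul]
  have s3 : ∑ p : Fin n × Fin n, Complex.normSq ((star U * V) p.1 p.2) * (lam p.1 * mu p.2)
      = ∑ i, ∑ j, Complex.normSq ((star U * V) i j) * (lam i * mu j) :=
    Fintype.sum_prod_type _
  have main' : (∑ p : Fin n × Fin n, Complex.normSq ((star U * V) p.1 p.2) * lam p.1 ^ r) ^ (1/r) *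
      (∑ p : Fin n × Fin n, Complex.normSq ((star U * V) p.1 p.2) * mu p.2 ^ (r/(r-1))) ^ ((r-1)/r)
      ≤ ∑ p : Fin n × Fin n, Complex.normSq ((star U * V) p.1 p.2) * (lam p.1 * mu p.2) := main
  rw [s1, s2, s3] at main'
  exact main'
end
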